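/- Directed branching bisimilarity is the complement of directed branching apartness: for all states p, q in an LTS with reflexive silent steps, p is directed branching bisimilar to q if and only if p is not directed branching apart from q. -/

import Mathlib

variable {X A : Type*}

/-- The reflexive transitive closure of the silent step relation (`none` is τ). -/
def TauStar (step : Option A → X → X → Prop) : X → X → Prop :=
  Relation.ReflTransGen (step none)

/-- `Q` is a directed branching apartness relation. -/
def IsDBApartRel (step : Option A → X → X → Prop) (Q : X → X → Prop) : Prop :=
  ∀ (α : Option A) (p p' q : X), step α p p' →
    (∀ q' q'', Relation.ReflTransGen (step none) q q' → step α q' q'' →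
      Q p q' ∨ Q p' q'' ∨ Q q'' p') → Q p q

/-- Directed branching apartness: the least directed branching apartness relation. -/
def DBApart (step : Option A → X → X → Prop) (p q : X) : Prop :=
  ∀ Q : X → X → Prop, IsDBApartRel step Q → Q p q

/-- `R` is a directed branching bisimulation. -/
def IsDBBisim (step : Option A → X → X → Prop) (R : X → X → Prop) : Prop :=
  ∀ (α : Option A) (p p' q : X), R p q → step α p p' →
    ∃ q' q'', TauStar step q q' ∧ step α q' q'' ∧ R p q' ∧ R p' q'' ∧ R q'' p'

/-- Directed branching bisimilarity. -/
def DBBisim (step : Option A → X → X → Prop) (p q : X) : Prop :=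
  ∃ R : X → X → Prop, IsDBBisim step R ∧ R p q

lemma dbApart_isDBApartRel (step : Option A → X → X → Prop) :
    IsDBApartRel step (DBApart step) := by
  intro α p p' q hstep hall Q hQ
  apply hQ α p p' q hstep
  intro q' q'' h1 h2
  rcases hall q' q'' h1 h2 with h | h | h
  · exact Or.inl (h Q hQ)
  · exact Or.inr (Or.inl (h Q hQ))
  · exact Or.inr (Or.inr (h Q hQ))

theorem dbBisim_iff_not_dbApart (step : Option A → X → X → Prop)
    (htau : ∀ p : X, step none p p) (p q : X) :
    DBBisim step p q ↔ ¬ DBApart step p q := by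
  constructor
  · rintro hb hap
    have hrel : IsDBApartRel step (fun x y => ¬ DBBisim step x y) := by
      intro α p p' q hstep hall ⟨R, hR, hpq⟩
      obtain ⟨q', q'', h1, h2, h3, h4, h5⟩ := hR α p p' q hpq hstep
      rcases hall q' q'' h1 h2 with h | h | h
      · exact h ⟨R, hR, h3⟩
      · exact h ⟨R, hR, h4⟩
      · exact h ⟨R, hR, h5⟩
    exact hap _ hrel hb
  · intro hnap
    refine ⟨fun x y => ¬ DBApart step x y, ?_, hnap⟩
    intro α p p' q hnpq hstep
    by_contra hcon
    push_neg at hcon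
    apply hnpq
    apply dbApart_isDBApartRel step α p p' q hstep
    intro q' q'' h1 h2
    by_contra hc
    push_neg at hc
    exact hc.2.2 (hcon q' q'' h1 h2 hc.1 hc.2.1)
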